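/- Let p(t) ∈ ℤ[t] have constant coefficient 1 and leading coefficient ±1, and write 1/p(t) = 1 + a_1 t + a_2 t^2 + ⋯ for its multiplicative inverse in ℤ[[t]]. Then the sequence (a_n) is polynomially bounded (there exist constants C and r with |a_n| ≤ C·n^r for all n ≥ 1) if and only if every zero of p(t) in ℂ is a root of unity. -/

import Mathlib

open Polynomial PowerSeries Finset Filter IntermediateField





noncomputable def geomN (N : ℕ) : PowerSeries ℤ :=
  PowerSeries.mk fun n => if N ∣ n then 1 else 0

lemma coeff_X_pow_mul' (N n : ℕ) (f : PowerSeries ℤ) :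
    (PowerSeries.coeff n) ((PowerSeries.X ^ N) * f) =
      if N ≤ n then PowerSeries.coeff (n - N) f else 0 := by
  rw [PowerSeries.coeff_mul]
  rcases le_or_gt N n with h | h
  · rw [if_pos h]
    rw [Finset.sum_eq_single (N, n - N)]
    · simp
    · rintro ⟨i, j⟩ hij hne
      rw [Finset.HasAntidiagonal.mem_antidiagonal] at hij
      have : i ≠ N := by
        rintro rfl
        exact hne (by simp [← hij])
      simp [PowerSeries.coeff_X_pow, this]
    · intro h'
      exact absurd (Finset.HasAntidiagonal.mem_antidiagonal.2 (by omega)) h'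
  · rw [if_neg (not_le.2 h)]
    apply Finset.sum_eq_zero
    rintro ⟨i, j⟩ hij
    rw [Finset.HasAntidiagonal.mem_antidiagonal] at hij
    have : i ≠ N := by omega
    simp [PowerSeries.coeff_X_pow, this]

lemma geomN_inv (N : ℕ) (hN : 0 < N) :
    ((1 : PowerSeries ℤ) - PowerSeries.X ^ N) * geomN N = 1 := by
  ext n
  rw [sub_mul, one_mul, map_sub, _root_.coeff_X_pow_mul']
  rcases Nat.eq_zero_or_pos n with rfl | hn
  · simp [geomN, hN.ne']
  rcases le_or_gt N n with h | h
  · rw [if_pos h]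
    have : N ∣ n ↔ N ∣ n - N := by
      constructor
      · intro hd; exact (Nat.dvd_sub hd dvd_rfl)
      · intro hd; have := Nat.dvd_add hd (dvd_refl N); rwa [Nat.sub_add_cancel h] at this
    simp only [geomN, PowerSeries.coeff_mk, this]
    simp [PowerSeries.coeff_one, hn.ne']
  · rw [if_neg (not_le.2 h)]
    have : ¬ N ∣ n := fun hd => absurd (Nat.le_of_dvd hn hd) (not_le.2 h)
    simp [geomN, this, PowerSeries.coeff_one, hn.ne']

lemma coeff_geomN_pow_bound (N : ℕ) (d n : ℕ) :
    |PowerSeries.coeff n ((geomN N) ^ d)| ≤ ((n : ℤ) + 1) ^ d := by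
  induction d generalizing n with
  | zero => simp [PowerSeries.coeff_one]; split <;> simp
  | succ d ih =>
    rw [pow_succ']
    rw [PowerSeries.coeff_mul]
    refine (Finset.abs_sum_le_sum_abs _ _).trans ?_
    have hcard : ∀ x ∈ Finset.HasAntidiagonal.antidiagonal n,
        |PowerSeries.coeff x.1 (geomN N) * PowerSeries.coeff x.2 ((geomN N) ^ d)|
          ≤ ((n : ℤ) + 1) ^ d := by
      rintro ⟨i, j⟩ hij
      rw [Finset.HasAntidiagonal.mem_antidiagonal] at hij
      rw [abs_mul]
      have h1 : |PowerSeries.coeff i (geomN N)| ≤ 1 := by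
        simp only [geomN, PowerSeries.coeff_mk]
        split <;> simp
      have h2 : |PowerSeries.coeff j ((geomN N) ^ d)| ≤ ((j : ℤ) + 1) ^ d := ih j
      calc |PowerSeries.coeff i (geomN N)| * |PowerSeries.coeff j ((geomN N) ^ d)|
          ≤ 1 * (((j : ℤ) + 1) ^ d) := by
            exact mul_le_mul h1 h2 (abs_nonneg _) zero_le_one
        _ = ((j : ℤ) + 1) ^ d := one_mul _
        _ ≤ ((n : ℤ) + 1) ^ d := by
            apply pow_le_pow_left₀ (by positivity)
            omega
    refine (Finset.sum_le_sum hcard).trans ?_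
    rw [Finset.sum_const, Finset.Nat.card_antidiagonal]
    rw [nsmul_eq_mul, pow_succ]
    push_cast
    ring_nf
    rw [mul_comm]


lemma prod_linear_dvd (N : ℕ) (s : Multiset ℂ) (hs : ∀ z ∈ s, z ^ N = 1) :
    (s.map (fun z => Polynomial.X - Polynomial.C z)).prod ∣ ((Polynomial.X : ℂ[X]) ^ N - 1) ^ Multiset.card s := by
  induction s using Multiset.induction with
  | empty => simp
  | cons z s ih =>
    rw [Multiset.map_cons, Multiset.prod_cons, Multiset.card_cons, pow_succ']
    apply mul_dvd_mul
    · rw [dvd_iff_isRoot]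
      simp [IsRoot, hs z (Multiset.mem_cons_self _ _)]
    · exact ih (fun w hw => hs w (Multiset.mem_cons_of_mem hw))

lemma sum_abs_coeff_le (q : Polynomial ℤ) (n : ℕ) :
    ∑ i ∈ Finset.range (n + 1), |q.coeff i| ≤ ∑ i ∈ Finset.range (q.natDegree + 1), |q.coeff i| := by
  rcases le_or_gt (n + 1) (q.natDegree + 1) with h | h
  · apply Finset.sum_le_sum_of_subset_of_nonneg (Finset.range_subset_range.2 h)
    intro i _ _; exact abs_nonneg _
  · apply le_of_eq
    symm
    apply Finset.sum_subset (Finset.range_subset_range.2 (by omega))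
    intro i hi hni
    rw [Finset.mem_range] at hi hni
    rw [q.coeff_eq_zero_of_natDegree_lt (by omega)]
    simp


lemma mpr_dir (p : Polynomial ℤ) (h0 : p.coeff 0 = 1)
    (hlead : p.leadingCoeff = 1 ∨ p.leadingCoeff = -1)
    (a : ℕ → ℤ) (ha : (p : PowerSeries ℤ) * PowerSeries.mk a = 1)
    (hroots : ∀ z : ℂ, Polynomial.aeval z p = 0 → ∃ m : ℕ, 0 < m ∧ z ^ m = 1) :
    ∃ C r : ℕ, ∀ n : ℕ, 1 ≤ n → |a n| ≤ (C : ℤ) * (n : ℤ) ^ r := by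
  classical
  set d := p.natDegree with hd
  -- monic version of p
  set p' : Polynomial ℤ := if p.leadingCoeff = 1 then p else -p with hp'
  have hp'monic : p'.Monic := by
    rcases hlead with h | h
    · simp [hp', h, Polynomial.Monic, h]
    · have : p.leadingCoeff ≠ 1 := by rw [h]; decide
      simp only [hp', if_neg this]
      unfold Polynomial.Monic
      rw [Polynomial.leadingCoeff_neg, h, neg_neg]
  have hp'deg : p'.natDegree = d := by
    rcases eq_or_ne p.leadingCoeff 1 with h | h <;> simp [hp', h, Polynomial.natDegree_neg, hd]
  have hpdvdp' : p ∣ p' := by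
    rcases eq_or_ne p.leadingCoeff 1 with h | h <;> simp [hp', h, dvd_neg]
  -- roots of p' over ℂ
  set f : ℤ →+* ℂ := algebraMap ℤ ℂ with hf
  set P' : Polynomial ℂ := p'.map f with hP'
  have hP'monic : P'.Monic := hp'monic.map f
  have hP'deg : P'.natDegree = d := by rw [hP', hp'monic.natDegree_map, hp'deg]
  have hP'card : Multiset.card P'.roots = d := by
    rw [← hP'deg]
    exact Polynomial.splits_iff_card_roots.mp (IsAlgClosed.splits P')
  -- every root of P' is a root of unity
  have hroot_unity : ∀ z ∈ P'.roots, ∃ m : ℕ, 0 < m ∧ z ^ m = 1 := by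
    intro z hz
    apply hroots
    have hz' := Polynomial.isRoot_of_mem_roots hz
    have : Polynomial.aeval z p' = 0 := by
      rwa [Polynomial.aeval_def, ← Polynomial.eval_map]
    rcases eq_or_ne p.leadingCoeff 1 with h | h
    · simpa [hp', h] using this
    · rw [hp', if_neg h, map_neg, neg_eq_zero] at this
      exact this
  -- choose N
  set mfun : ℂ → ℕ := fun z => if h : ∃ m : ℕ, 0 < m ∧ z ^ m = 1 then h.choose else 1 with hmfun
  have hmfun_pos : ∀ z, 0 < mfun z := by
    intro z
    simp only [hmfun]
    split
    · exact (Exists.choose_spec ‹∃ m : ℕ, 0 < m ∧ z ^ m = 1›).1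
    · exact one_pos
  set N : ℕ := ∏ z ∈ P'.roots.toFinset, mfun z with hN
  have hNpos : 0 < N := Finset.prod_pos (fun z _ => hmfun_pos z)
  have hzN : ∀ z ∈ P'.roots, z ^ N = 1 := by
    intro z hz
    have h := hroot_unity z hz
    have hm1 : z ^ mfun z = 1 := by
      simp only [hmfun, dif_pos h]
      exact h.choose_spec.2
    have hdvd : mfun z ∣ N := Finset.dvd_prod_of_mem _ (Multiset.mem_toFinset.2 hz)
    obtain ⟨k, hk⟩ := hdvd
    rw [hk, pow_mul, hm1, one_pow]
  -- divisibility over ℂ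
  have hdvdC : P' ∣ ((Polynomial.X : Polynomial ℂ) ^ N - 1) ^ d := by
    rw [(IsAlgClosed.splits P').eq_prod_roots_of_monic hP'monic]
    rw [← hP'card]
    exact prod_linear_dvd N P'.roots hzN
  -- back to ℤ
  have hdvdZ : p' ∣ ((Polynomial.X : Polynomial ℤ) ^ N - 1) ^ d := by
    rw [← Polynomial.map_dvd_map f Int.cast_injective hp'monic]
    rwa [Polynomial.map_pow, Polynomial.map_sub, Polynomial.map_pow, Polynomial.map_X,
      Polynomial.map_one]
  have hdvd2 : p ∣ ((1 : Polynomial ℤ) - Polynomial.X ^ N) ^ d := by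
    have h1 : ((1 : Polynomial ℤ) - Polynomial.X ^ N) ^ d = (-1) ^ d * ((Polynomial.X : Polynomial ℤ) ^ N - 1) ^ d := by
      rw [← neg_pow, neg_sub]
    rw [h1]
    exact Dvd.dvd.mul_left (dvd_trans hpdvdp' hdvdZ) _
  obtain ⟨q, hq⟩ := hdvd2
  -- to power series
  have hkey : PowerSeries.mk a = (q : PowerSeries ℤ) * (geomN N) ^ d := by
    have hcoe : (((1 : Polynomial ℤ) - Polynomial.X ^ N : Polynomial ℤ) : PowerSeries ℤ)
        = (1 : PowerSeries ℤ) - PowerSeries.X ^ N := by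
      rw [Polynomial.coe_sub, Polynomial.coe_one, Polynomial.coe_pow, Polynomial.coe_X]
    have hps : (p : PowerSeries ℤ) * ((q : PowerSeries ℤ) * (geomN N) ^ d) = 1 := by
      have := congrArg (fun r : Polynomial ℤ => ((r : PowerSeries ℤ) * (geomN N) ^ d)) hq
      simp only [Polynomial.coe_pow, Polynomial.coe_mul] at this
      rw [hcoe] at this
      calc (p : PowerSeries ℤ) * ((q : PowerSeries ℤ) * (geomN N) ^ d)
          = ((1 : PowerSeries ℤ) - PowerSeries.X ^ N) ^ d * (geomN N) ^ d := by
            rw [this]; ring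
        _ = (((1 : PowerSeries ℤ) - PowerSeries.X ^ N) * geomN N) ^ d := by rw [mul_pow]
        _ = 1 := by rw [geomN_inv N hNpos, one_pow]
    calc PowerSeries.mk a = ((p : PowerSeries ℤ) * ((q : PowerSeries ℤ) * (geomN N) ^ d))
          * PowerSeries.mk a := by rw [hps, one_mul]
      _ = ((p : PowerSeries ℤ) * PowerSeries.mk a) * ((q : PowerSeries ℤ) * (geomN N) ^ d) := by
          ring
      _ = (q : PowerSeries ℤ) * (geomN N) ^ d := by rw [ha, one_mul]
  -- bound
  set Sq : ℤ := ∑ i ∈ Finset.range (q.natDegree + 1), |q.coeff i| with hSq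
  have hSq0 : 0 ≤ Sq := Finset.sum_nonneg (fun i _ => abs_nonneg _)
  refine ⟨(Sq * 2 ^ d).toNat, d, ?_⟩
  intro n hn
  have han : a n = ∑ x ∈ Finset.HasAntidiagonal.antidiagonal n,
      q.coeff x.1 * PowerSeries.coeff x.2 ((geomN N) ^ d) := by
    have : a n = PowerSeries.coeff n (PowerSeries.mk a) := by simp
    rw [this, hkey, PowerSeries.coeff_mul]
    apply Finset.sum_congr rfl
    rintro ⟨i, j⟩ _
    rw [Polynomial.coeff_coe]
  have hb1 : |a n| ≤ ((n : ℤ) + 1) ^ d * Sq := by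
    rw [han]
    refine (Finset.abs_sum_le_sum_abs _ _).trans ?_
    have : ∀ x ∈ Finset.HasAntidiagonal.antidiagonal n,
        |q.coeff x.1 * PowerSeries.coeff x.2 ((geomN N) ^ d)|
          ≤ |q.coeff x.1| * ((n : ℤ) + 1) ^ d := by
      rintro ⟨i, j⟩ hij
      rw [Finset.HasAntidiagonal.mem_antidiagonal] at hij
      rw [abs_mul]
      refine mul_le_mul_of_nonneg_left ?_ (abs_nonneg _)
      refine (coeff_geomN_pow_bound N d j).trans ?_
      apply pow_le_pow_left₀ (by positivity)
      have : j ≤ n := by omega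
      push_cast; omega
    refine (Finset.sum_le_sum this).trans ?_
    rw [← Finset.sum_mul]
    rw [Finset.Nat.sum_antidiagonal_eq_sum_range_succ_mk]
    simp only []
    rw [mul_comm]
    exact mul_le_mul_of_nonneg_left (sum_abs_coeff_le q n) (by positivity)
  have h2 : ((n : ℤ) + 1) ^ d ≤ 2 ^ d * (n : ℤ) ^ d := by
    rw [← mul_pow]
    apply pow_le_pow_left₀ (by positivity)
    have : (1 : ℤ) ≤ n := by exact_mod_cast hn
    linarith
  calc |a n| ≤ ((n : ℤ) + 1) ^ d * Sq := hb1
    _ ≤ (2 ^ d * (n : ℤ) ^ d) * Sq := mul_le_mul_of_nonneg_right h2 hSq0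
    _ = (Sq * 2 ^ d) * (n : ℤ) ^ d := by ring
    _ = ((Sq * 2 ^ d).toNat : ℤ) * (n : ℤ) ^ d := by
        rw [Int.toNat_of_nonneg (by positivity)]




lemma sum_abs_coeff_le' (q : Polynomial ℤ) (n : ℕ) :
    ∑ i ∈ Finset.range (n + 1), |q.coeff i| ≤ ∑ i ∈ Finset.range (q.natDegree + 1), |q.coeff i| := by
  rcases le_or_gt (n + 1) (q.natDegree + 1) with h | h
  · apply Finset.sum_le_sum_of_subset_of_nonneg (Finset.range_subset_range.2 h)
    intro i _ _; exact abs_nonneg _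
  · apply le_of_eq; symm
    apply Finset.sum_subset (Finset.range_subset_range.2 (by omega))
    intro i hi hni
    rw [Finset.mem_range] at hi hni
    rw [q.coeff_eq_zero_of_natDegree_lt (by omega)]; simp

lemma no_small_root (p : Polynomial ℤ) (h0 : p.coeff 0 = 1)
    (a : ℕ → ℤ) (ha : (p : PowerSeries ℤ) * PowerSeries.mk a = 1)
    (C r : ℕ) (hb : ∀ n : ℕ, 1 ≤ n → |a n| ≤ (C : ℤ) * (n : ℤ) ^ r)
    (z : ℂ) (hz : Polynomial.aeval z p = 0) (hlt : ‖z‖ < 1) : False := by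
  classical
  set d := p.natDegree with hd
  have ha0 : a 0 = 1 := by
    have := congrArg (PowerSeries.coeff 0) ha
    simpa [PowerSeries.coeff_zero_eq_constantCoeff, h0] using this
  set S : ℤ := ∑ i ∈ Finset.range (d + 1), |p.coeff i| with hS
  have hS1 : 1 ≤ S := by
    calc (1 : ℤ) = |p.coeff 0| := by rw [h0]; simp
      _ ≤ S := Finset.single_le_sum (f := fun i => |p.coeff i|)
          (fun i _ => abs_nonneg _) (Finset.mem_range.2 (by omega))
  -- the key finite-stage estimate
  have key : ∀ n : ℕ, 1 ≤ n →
      (1 : ℝ) ≤ (d : ℝ) * ((S : ℝ) * (((C : ℝ) + 1) * ((n : ℝ) + 1) ^ r)) * ‖z‖ ^ (n + 1) := by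
    intro n hn
    set A : ℤ := ((C : ℤ) + 1) * ((n : ℤ) + 1) ^ r with hA
    have hA1 : 1 ≤ A := by
      have h1 : (1 : ℤ) ≤ ((n : ℤ) + 1) ^ r :=
        one_le_pow₀ (by exact_mod_cast Nat.le_add_left 1 n)
      nlinarith [Int.natCast_nonneg C]
    set T : Polynomial ℤ := PowerSeries.trunc (n + 1) (PowerSeries.mk a) with hT
    set B : Polynomial ℤ := p * T with hB
    have hTc : ∀ j, T.coeff j = if j < n + 1 then a j else 0 := by
      intro j; rw [hT, PowerSeries.coeff_trunc]; simp
    -- coefficients of B up to n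
    have hBc : ∀ m, m ≤ n → B.coeff m = if m = 0 then 1 else 0 := by
      intro m hm
      have h1 : B.coeff m = PowerSeries.coeff m ((B : PowerSeries ℤ)) := by
        rw [Polynomial.coeff_coe]
      rw [h1, hB, Polynomial.coe_mul, PowerSeries.coeff_mul]
      have h2 : ∀ x ∈ Finset.HasAntidiagonal.antidiagonal m,
          PowerSeries.coeff x.1 (p : PowerSeries ℤ) * PowerSeries.coeff x.2 (T : PowerSeries ℤ)
            = PowerSeries.coeff x.1 (p : PowerSeries ℤ)
              * PowerSeries.coeff x.2 (PowerSeries.mk a) := by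
        rintro ⟨i, j⟩ hij
        rw [Finset.HasAntidiagonal.mem_antidiagonal] at hij
        congr 1
        rw [Polynomial.coeff_coe, hTc, if_pos (by omega), PowerSeries.coeff_mk]
      rw [Finset.sum_congr rfl h2, ← PowerSeries.coeff_mul, ha]
      rw [PowerSeries.coeff_one]
    -- degree bound
    have hTdeg : T.natDegree ≤ n := by
      apply Polynomial.natDegree_le_iff_coeff_eq_zero.2
      intro N hN
      rw [hTc, if_neg (by omega)]
    have hBdeg : B.natDegree ≤ d + n :=
      (Polynomial.natDegree_mul_le).trans (add_le_add le_rfl hTdeg)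
    -- coefficient bound for all m
    have hBbound : ∀ m, |B.coeff m| ≤ S * A := by
      intro m
      have h1 : B.coeff m = ∑ x ∈ Finset.HasAntidiagonal.antidiagonal m, p.coeff x.1 * T.coeff x.2 := by
        have : B.coeff m = PowerSeries.coeff m ((B : PowerSeries ℤ)) := by
          rw [Polynomial.coeff_coe]
        rw [this, hB, Polynomial.coe_mul, PowerSeries.coeff_mul]
        apply Finset.sum_congr rfl
        rintro ⟨i, j⟩ _
        rw [Polynomial.coeff_coe, Polynomial.coeff_coe]
      rw [h1]
      refine (Finset.abs_sum_le_sum_abs _ _).trans ?_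
      have h2 : ∀ x ∈ Finset.HasAntidiagonal.antidiagonal m,
          |p.coeff x.1 * T.coeff x.2| ≤ |p.coeff x.1| * A := by
        rintro ⟨i, j⟩ hij
        rw [abs_mul]
        refine mul_le_mul_of_nonneg_left ?_ (abs_nonneg _)
        rw [hTc]
        split
        · rcases Nat.eq_zero_or_pos j with rfl | hj
          · rw [ha0]; simpa using hA1
          · refine (hb j hj).trans ?_
            rw [hA]
            have h3 : (C : ℤ) * (j : ℤ) ^ r ≤ (C : ℤ) * ((n : ℤ) + 1) ^ r := by
              apply mul_le_mul_of_nonneg_left _ (by positivity)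
              apply pow_le_pow_left₀ (by positivity)
              have : j < n + 1 := by assumption
              push_cast; omega
            have h4 : (C : ℤ) * ((n : ℤ) + 1) ^ r ≤ ((C : ℤ) + 1) * ((n : ℤ) + 1) ^ r := by
              apply mul_le_mul_of_nonneg_right _ (by positivity)
              omega
            omega
        · simp; positivity
      refine (Finset.sum_le_sum h2).trans ?_
      rw [← Finset.sum_mul, Finset.Nat.sum_antidiagonal_eq_sum_range_succ_mk]
      exact mul_le_mul_of_nonneg_right (sum_abs_coeff_le' p m) (by positivity)
    -- evaluate at z
    have hBz : Polynomial.aeval z B = 0 := by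
      rw [hB, map_mul, hz, zero_mul]
    have hsum : Polynomial.aeval z B
        = ∑ m ∈ Finset.range (d + n + 1), (B.coeff m : ℂ) * z ^ m := by
      rw [Polynomial.aeval_eq_sum_range' (by omega : B.natDegree < d + n + 1)]
      apply Finset.sum_congr rfl
      intro m _
      rw [zsmul_eq_mul]
    have hsplit : ∑ m ∈ Finset.range (d + n + 1), (B.coeff m : ℂ) * z ^ m
        = (∑ m ∈ Finset.range (n + 1), (B.coeff m : ℂ) * z ^ m)
          + ∑ m ∈ Finset.Ico (n + 1) (d + n + 1), (B.coeff m : ℂ) * z ^ m := by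
      rw [Finset.range_eq_Ico, Finset.range_eq_Ico]
      exact (Finset.sum_Ico_consecutive _ (by omega : 0 ≤ n + 1)
        (by omega : n + 1 ≤ d + n + 1)).symm
    have hfirst : ∑ m ∈ Finset.range (n + 1), (B.coeff m : ℂ) * z ^ m = 1 := by
      rw [Finset.sum_eq_single 0]
      · rw [hBc 0 (by omega)]; simp
      · intro m hm hm0
        rw [Finset.mem_range] at hm
        rw [hBc m (by omega), if_neg hm0]; simp
      · intro h; exact absurd (Finset.mem_range.2 (by omega)) h
    have hone : (1 : ℂ) = - ∑ m ∈ Finset.Ico (n + 1) (d + n + 1), (B.coeff m : ℂ) * z ^ m := by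
      have := hBz
      rw [hsum, hsplit, hfirst] at this
      linear_combination this
    have hnorm : (1 : ℝ) ≤ ∑ m ∈ Finset.Ico (n + 1) (d + n + 1), ((S : ℝ) * A) * ‖z‖ ^ (n + 1) := by
      calc (1 : ℝ) = ‖(1 : ℂ)‖ := by simp
        _ = ‖∑ m ∈ Finset.Ico (n + 1) (d + n + 1), (B.coeff m : ℂ) * z ^ m‖ := by
            rw [hone, norm_neg]
        _ ≤ ∑ m ∈ Finset.Ico (n + 1) (d + n + 1), ‖(B.coeff m : ℂ) * z ^ m‖ :=
            norm_sum_le _ _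
        _ ≤ ∑ m ∈ Finset.Ico (n + 1) (d + n + 1), ((S : ℝ) * A) * ‖z‖ ^ (n + 1) := by
            apply Finset.sum_le_sum
            intro m hm
            rw [Finset.mem_Ico] at hm
            rw [norm_mul, norm_pow]
            have hc : ‖(B.coeff m : ℂ)‖ ≤ (S : ℝ) * A := by
              rw [Complex.norm_intCast]
              have := hBbound m
              calc |(B.coeff m : ℝ)| = ((|B.coeff m| : ℤ) : ℝ) := by
                    rw [Int.cast_abs]
                _ ≤ (((S * A : ℤ)) : ℝ) := by exact_mod_cast this
                _ = (S : ℝ) * A := by push_cast; ring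
            have hzp : ‖z‖ ^ m ≤ ‖z‖ ^ (n + 1) :=
              pow_le_pow_of_le_one (norm_nonneg z) hlt.le (by omega)
            exact mul_le_mul hc hzp (by positivity) (by positivity)
    rw [Finset.sum_const, Nat.card_Ico] at hnorm
    have hcard : d + n + 1 - (n + 1) = d := by omega
    rw [hcard, nsmul_eq_mul] at hnorm
    calc (1 : ℝ) ≤ (d : ℝ) * (((S : ℝ) * A) * ‖z‖ ^ (n + 1)) := hnorm
      _ = (d : ℝ) * ((S : ℝ) * (((C : ℝ) + 1) * ((n : ℝ) + 1) ^ r)) * ‖z‖ ^ (n + 1) := by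
          rw [hA]; push_cast; ring
  -- limit argument
  have hsummable : Summable (fun n : ℕ => (n : ℝ) ^ r * ‖z‖ ^ n) := by
    apply summable_pow_mul_geometric_of_norm_lt_one
    rwa [Real.norm_eq_abs, abs_of_nonneg (norm_nonneg z)]
  have htend0 : Tendsto (fun n : ℕ => (n : ℝ) ^ r * ‖z‖ ^ n) atTop (nhds 0) :=
    hsummable.tendsto_atTop_zero
  have htend1 : Tendsto (fun n : ℕ => ((n : ℝ) + 1) ^ r * ‖z‖ ^ (n + 1)) atTop (nhds 0) := by
    have h := htend0.comp (tendsto_add_atTop_nat 1)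
    have heq : (fun n : ℕ => ((n : ℝ) + 1) ^ r * ‖z‖ ^ (n + 1))
        = (fun n : ℕ => ((n : ℕ) : ℝ) ^ r * ‖z‖ ^ n) ∘ (fun n : ℕ => n + 1) := by
      funext n
      simp only [Function.comp]
      push_cast
      ring
    rwa [heq]
  have htend : Tendsto
      (fun n : ℕ => (d : ℝ) * ((S : ℝ) * (((C : ℝ) + 1) * ((n : ℝ) + 1) ^ r)) * ‖z‖ ^ (n + 1))
      atTop (nhds 0) := by
    have h2 := htend1.const_mul ((d : ℝ) * (S : ℝ) * ((C : ℝ) + 1))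
    rw [mul_zero] at h2
    convert h2 using 2 with n
    ring
  have hev : ∀ᶠ n : ℕ in atTop,
      (d : ℝ) * ((S : ℝ) * (((C : ℝ) + 1) * ((n : ℝ) + 1) ^ r)) * ‖z‖ ^ (n + 1) < 1 :=
    htend.eventually (gt_mem_nhds one_pos)
  obtain ⟨n, hn1, hn2⟩ := (hev.and (eventually_ge_atTop 1)).exists
  exact absurd (key n hn2) (not_le.2 hn1)
lemma multiset_one_le_prod (s : Multiset ℝ) (h : ∀ x ∈ s, (1:ℝ) ≤ x) : 1 ≤ s.prod := by
  induction s using Multiset.induction with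
  | empty => simp
  | cons y t ih =>
    rw [Multiset.prod_cons]
    have hy := h y (Multiset.mem_cons_self _ _)
    have ht := ih (fun x hx => h x (Multiset.mem_cons_of_mem hx))
    nlinarith

lemma root_norm_one (p : Polynomial ℤ) (h0 : p.coeff 0 = 1)
    (hlead : p.leadingCoeff = 1 ∨ p.leadingCoeff = -1)
    (a : ℕ → ℤ) (ha : (p : PowerSeries ℤ) * PowerSeries.mk a = 1)
    (C r : ℕ) (hb : ∀ n : ℕ, 1 ≤ n → |a n| ≤ (C : ℤ) * (n : ℤ) ^ r)
    (z : ℂ) (hz : Polynomial.aeval z p = 0) : ‖z‖ = 1 := by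
  have hge : ∀ w : ℂ, Polynomial.aeval w p = 0 → 1 ≤ ‖w‖ := by
    intro w hw
    by_contra h
    exact no_small_root p h0 a ha C r hb w hw (not_le.1 h)
  set f : ℤ →+* ℂ := algebraMap ℤ ℂ with hf
  set P : Polynomial ℂ := p.map f with hP
  have hP0 : P ≠ 0 := by
    intro h
    have : P.coeff 0 = 1 := by rw [hP, Polynomial.coeff_map, h0]; simp
    rw [h] at this
    simp at this
  have hzroot : z ∈ P.roots := by
    rw [Polynomial.mem_roots hP0]
    rw [Polynomial.IsRoot, hP, Polynomial.eval_map, ← Polynomial.aeval_def]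
    exact hz
  have hroots_ge : ∀ w ∈ P.roots, 1 ≤ ‖w‖ := by
    intro w hw
    apply hge
    have := Polynomial.isRoot_of_mem_roots hw
    rwa [Polynomial.IsRoot, hP, Polynomial.eval_map, ← Polynomial.aeval_def] at this
  -- product of norms of roots = 1
  have hfact := (IsAlgClosed.splits P).eq_prod_roots
  have heval0 : P.eval 0 = 1 := by
    rw [← Polynomial.coeff_zero_eq_eval_zero, hP, Polynomial.coeff_map, h0]
    simp
  have hlc : ‖P.leadingCoeff‖ = 1 := by
    rw [hP, Polynomial.leadingCoeff_map_of_injective (by exact Int.cast_injective)]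
    rcases hlead with h | h <;> rw [h] <;> simp
  have hprodnorm : (P.roots.map fun w => ‖w‖).prod = 1 := by
    have h1 := congrArg (fun q : Polynomial ℂ => ‖q.eval 0‖) hfact
    simp only [heval0, Polynomial.eval_mul, Polynomial.eval_C,
      Polynomial.eval_multiset_prod, Multiset.map_map] at h1
    have h2 : (Multiset.map ((fun q : Polynomial ℂ => q.eval 0) ∘ fun w =>
        Polynomial.X - Polynomial.C w) P.roots) = P.roots.map (fun w => -w) := by
      apply Multiset.map_congr rfl
      intro w _
      simp [Function.comp]
    rw [h2] at h1
    have h3 : ‖(1 : ℂ)‖ = ‖P.leadingCoeff‖ * ‖(P.roots.map fun w => -w).prod‖ := by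
      simpa [norm_mul] using h1
    rw [hlc, one_mul, norm_one] at h3
    have h4 : ‖(P.roots.map fun w => -w).prod‖ = (P.roots.map fun w => ‖w‖).prod := by
      rw [show ‖(P.roots.map fun w => -w).prod‖ = normHom (P.roots.map fun w => -w).prod from rfl,
        map_multiset_prod (normHom : ℂ →*₀ ℝ), Multiset.map_map]
      apply congrArg Multiset.prod
      apply Multiset.map_congr rfl
      intro w _
      simp
    rw [← h4, ← h3]
  -- conclude
  have hle : ‖z‖ ≤ 1 := by
    have hcons := Multiset.cons_erase (Multiset.mem_map_of_mem (fun w => ‖w‖) hzroot)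
    have hrest : 1 ≤ ((P.roots.map fun w => ‖w‖).erase ‖z‖).prod := by
      apply multiset_one_le_prod
      intro x hx
      have hx' : x ∈ P.roots.map fun w => ‖w‖ := Multiset.mem_of_mem_erase hx
      obtain ⟨w, hw, rfl⟩ := Multiset.mem_map.1 hx'
      exact hroots_ge w hw
    have : ‖z‖ * ((P.roots.map fun w => ‖w‖).erase ‖z‖).prod = 1 := by
      rw [← Multiset.prod_cons, hcons, hprodnorm]
    nlinarith [norm_nonneg z]
  exact le_antisymm hle (hge z hz)
lemma mp_dir (p : Polynomial ℤ) (h0 : p.coeff 0 = 1)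
    (hlead : p.leadingCoeff = 1 ∨ p.leadingCoeff = -1)
    (a : ℕ → ℤ) (ha : (p : PowerSeries ℤ) * PowerSeries.mk a = 1)
    (C r : ℕ) (hb : ∀ n : ℕ, 1 ≤ n → |a n| ≤ (C : ℤ) * (n : ℤ) ^ r) :
    ∀ z : ℂ, Polynomial.aeval z p = 0 → ∃ m : ℕ, 0 < m ∧ z ^ m = 1 := by
  intro z hz
  classical
  set p' : Polynomial ℤ := if p.leadingCoeff = 1 then p else -p with hp'
  have hp'monic : p'.Monic := by
    rcases hlead with h | h
    · simp [hp', h, Polynomial.Monic, h]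
    · have hne : p.leadingCoeff ≠ 1 := by rw [h]; decide
      simp only [hp', if_neg hne]
      unfold Polynomial.Monic
      rw [Polynomial.leadingCoeff_neg, h, neg_neg]
  have hzp' : Polynomial.aeval z p' = 0 := by
    rcases eq_or_ne p.leadingCoeff 1 with h | h
    · simpa [hp', h] using hz
    · rw [hp', if_neg h, map_neg, hz, neg_zero]
  have hzint : IsIntegral ℤ z := ⟨p', hp'monic, by rwa [← Polynomial.aeval_def]⟩
  have hzintQ : IsIntegral ℚ z := hzint.tower_top
  haveI : FiniteDimensional ℚ ℚ⟮z⟯ := IntermediateField.adjoin.finiteDimensional hzintQ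
  haveI : NumberField ℚ⟮z⟯ := ⟨⟩
  set x := IntermediateField.AdjoinSimple.gen ℚ z with hx
  have hmapx : algebraMap ℚ⟮z⟯ ℂ x = z := IntermediateField.AdjoinSimple.algebraMap_gen ℚ z
  have hxint : IsIntegral ℤ x := by
    have := isIntegral_algebraMap_iff (A := ℚ⟮z⟯) (B := ℂ) (R := ℤ) (x := x)
      (algebraMap ℚ⟮z⟯ ℂ).injective
    rw [hmapx] at this
    exact this.1 hzint
  have haevalx : Polynomial.aeval x p = 0 := by
    have h1 : algebraMap ℚ⟮z⟯ ℂ (Polynomial.aeval x p) = 0 := by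
      rw [← Polynomial.aeval_algebraMap_apply, hmapx, hz]
    exact (map_eq_zero_iff _ (algebraMap ℚ⟮z⟯ ℂ).injective).1 h1
  have hnorm : ∀ φ : ℚ⟮z⟯ →+* ℂ, ‖φ x‖ = 1 := by
    intro φ
    apply root_norm_one p h0 hlead a ha C r hb
    have h2 : Polynomial.aeval (φ x) p = φ (Polynomial.aeval x p) := by
      rw [Polynomial.aeval_def, Polynomial.aeval_def, Polynomial.hom_eval₂]
      congr 1
      exact Subsingleton.elim _ _
    rw [h2, haevalx, map_zero]
  obtain ⟨m, hm, hxm⟩ := NumberField.Embeddings.pow_eq_one_of_norm_eq_one ℚ⟮z⟯ ℂ hxint hnorm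
  refine ⟨m, hm, ?_⟩
  rw [← hmapx, ← map_pow, hxm, map_one]


open scoped Polynomial

/-- For p(t) ∈ ℤ[t] with constant coefficient 1 and leading coefficient
±1, writing 1/p(t) = Σ a_n t^n in ℤ[[t]], the sequence (a_n) is polynomially bounded
if and only if every complex zero of p is a root of unity. -/
theorem statement_10 (p : Polynomial ℤ) (h0 : p.coeff 0 = 1)
    (hlead : p.leadingCoeff = 1 ∨ p.leadingCoeff = -1)
    (a : ℕ → ℤ) (ha : (p : PowerSeries ℤ) * PowerSeries.mk a = 1) :
    (∃ C r : ℕ, ∀ n : ℕ, 1 ≤ n → |a n| ≤ (C : ℤ) * (n : ℤ) ^ r) ↔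
      ∀ z : ℂ, Polynomial.aeval z p = 0 → ∃ m : ℕ, 0 < m ∧ z ^ m = 1 := by
  constructor
  · rintro ⟨C, r, hb⟩
    exact mp_dir p h0 hlead a ha C r hb
  · exact mpr_dir p h0 hlead a ha
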